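/- Let C be a symmetric n×n real matrix and let 0 < δ < 1/3. Define the grid D_δ = {x = (x₁,…,x_n) ∈ R^n : ‖x‖₂ ≤ 1 and (√n·x_i)/δ ∈ Z for every i}. Then ‖C‖ ≤ (1 − 3δ)^{−1}·max_{x ∈ D_δ} |xᵀ·C·x|, where ‖·‖ denotes the spectral norm. -/

import Mathlib

open MeasureTheory ProbabilityTheory Finset Matrix Filter

noncomputable section

namespace HSBM

/-- The set of (hyper)edges: all `d`-element subsets of `[n]`. -/
def edgeSet (n d : ℕ) : Finset (Finset (Fin n)) :=
  (Finset.univ : Finset (Fin n)).powersetCard d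

/-- An edge is homogeneous w.r.t. a partition `Ψ` if all its nodes lie in one group. -/
def homogeneous {n k : ℕ} (Ψ : Fin n → Fin k) (e : Finset (Fin n)) : Prop :=
  ∀ i ∈ e, ∀ j ∈ e, Ψ i = Ψ j

/-- Similarity matrix built from the weights of the edges in `E₁` only. -/
def simMatrixOn {n : ℕ} (d : ℕ) (E₁ : Finset (Finset (Fin n))) (W : Finset (Fin n) → ℝ) :
    Matrix (Fin n) (Fin n) ℝ := fun i j =>
  if i = j then 0
  else ∑ e ∈ edgeSet n d ∩ E₁, if ({i, j} : Finset (Fin n)) ⊆ e then W e else 0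

/-- Similarity matrix `A` of a weighted hypergraph. -/
def simMatrix {n : ℕ} (d : ℕ) (W : Finset (Fin n) → ℝ) : Matrix (Fin n) (Fin n) ℝ :=
  simMatrixOn d (edgeSet n d) W

/-- Processed similarity matrix `A⁰`: rows (and columns) whose sum exceeds
`c_thr · (1/n) · Σ_{i,j} A_{ij}` are zeroed out. -/
def processed {n : ℕ} (cthr : ℝ) (A : Matrix (Fin n) (Fin n) ℝ) : Matrix (Fin n) (Fin n) ℝ :=
  fun i j =>
    if cthr * ((1 : ℝ) / n) * ∑ a, ∑ b, A a b < ∑ l, A i l ∨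
        cthr * ((1 : ℝ) / n) * ∑ a, ∑ b, A a b < ∑ l, A j l then 0
    else A i j

/-- `U` is an `n × k` matrix whose columns are orthonormal eigenvectors of `M`
associated with its `k` largest eigenvalues. -/
def IsTopEigen {n k : ℕ} (M : Matrix (Fin n) (Fin n) ℝ) (U : Matrix (Fin n) (Fin k) ℝ) : Prop :=
  ∃ (v : Fin n → Fin n → ℝ) (lam : Fin n → ℝ),
    (∀ a b : Fin n, v a ⬝ᵥ v b = if a = b then (1 : ℝ) else 0) ∧
    (∀ a : Fin n, M.mulVec (v a) = lam a • v a) ∧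
    (∀ a b : Fin n, a ≤ b → lam b ≤ lam a) ∧
    (∀ (j : Fin k) (hj : (j : ℕ) < n) (i : Fin n), U i j = v ⟨j, hj⟩ i)

def clusterOf {n k : ℕ} (Φ : Fin n → Fin k) (j : Fin k) : Finset (Fin n) :=
  Finset.univ.filter fun i => Φ i = j

/-- `k`-means cost of a partition `Φ` of the rows of `U`. -/
def kmCost {n k : ℕ} (U : Matrix (Fin n) (Fin k) ℝ) (Φ : Fin n → Fin k) : ℝ :=
  ∑ j : Fin k, ∑ i ∈ clusterOf Φ j,
    ∑ m : Fin k,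
      (U i m - (1 / ((clusterOf Φ j).card : ℝ)) * ∑ l ∈ clusterOf Φ j, U l m) ^ 2

/-- `Φ` is a `(1+ε)`-approximate `k`-means solution for the rows of `U`. -/
def IsApproxKMeans {n k : ℕ} (ε : ℝ) (U : Matrix (Fin n) (Fin k) ℝ) (Φ : Fin n → Fin k) : Prop :=
  ∀ Φ' : Fin n → Fin k, kmCost U Φ ≤ (1 + ε) * kmCost U Φ'

/-- `Φ` is an output of HSC run on the edges in `E₁`. -/
def IsHSCOutputOn {n k : ℕ} (d : ℕ) (cthr ε : ℝ) (E₁ : Finset (Finset (Fin n)))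
    (W : Finset (Fin n) → ℝ) (Φ : Fin n → Fin k) : Prop :=
  ∃ U : Matrix (Fin n) (Fin k) ℝ,
    IsTopEigen (processed cthr (simMatrixOn d E₁ W)) U ∧ IsApproxKMeans ε U Φ

/-- `Φ` is an output of HSC. -/
def IsHSCOutput {n k : ℕ} (d : ℕ) (cthr ε : ℝ) (W : Finset (Fin n) → ℝ)
    (Φ : Fin n → Fin k) : Prop :=
  IsHSCOutputOn d cthr ε (edgeSet n d) W Φ

/-- `E^{(i)}(j)`: the edges of `E₂` containing `i` whose other nodes all lie in `Φ₀⁻¹(j)`. -/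
def refineEdges {n k : ℕ} (E₂ : Finset (Finset (Fin n))) (Φ₀ : Fin n → Fin k)
    (i : Fin n) (j : Fin k) : Finset (Finset (Fin n)) :=
  E₂.filter fun e => i ∈ e ∧ ∀ l ∈ e, l ≠ i → Φ₀ l = j

/-- Average weight over `E^{(i)}(j)`. -/
def avgWeight {n k : ℕ} (W : Finset (Fin n) → ℝ) (E₂ : Finset (Finset (Fin n)))
    (Φ₀ : Fin n → Fin k) (i : Fin n) (j : Fin k) : ℝ :=
  (∑ e ∈ refineEdges E₂ Φ₀ i j, W e) / ((refineEdges E₂ Φ₀ i j).card : ℝ)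

/-- `Φ` is an output of HSCLR given realized weights `W` and split indicators `ξ`
(`ξ e = 1` iff `e ∈ E₁`). -/
def IsHSCLROutput {n k : ℕ} (d : ℕ) (cthr ε : ℝ) (W : Finset (Fin n) → ℝ)
    (ξ : Finset (Fin n) → ℝ) (Φ : Fin n → Fin k) : Prop :=
  ∃ Φ₀ : Fin n → Fin k,
    IsHSCOutputOn d cthr ε ((edgeSet n d).filter fun e => ξ e = 1) W Φ₀ ∧
    ∀ (i : Fin n) (j : Fin k),
      avgWeight W ((edgeSet n d).filter fun e => ξ e ≠ 1) Φ₀ i j ≤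
        avgWeight W ((edgeSet n d).filter fun e => ξ e ≠ 1) Φ₀ i (Φ i)

/-- Error fraction `err(Φ)`. -/
def errFrac {n k : ℕ} (Ψ Φ : Fin n → Fin k) : ℝ :=
  (⨅ π : Equiv.Perm (Fin k),
    ((Finset.univ.filter fun i => Ψ i ≠ π (Φ i)).card : ℝ)) / n

/-- Size of the `j`-th cluster. -/
def csize {n k : ℕ} (Ψ : Fin n → Fin k) (j : Fin k) : ℕ :=
  (Finset.univ.filter fun i => Ψ i = j).card

def nmin {n k : ℕ} (Ψ : Fin n → Fin k) : ℕ := sInf (Set.range fun j => csize Ψ j)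

def nmax {n k : ℕ} (Ψ : Fin n → Fin k) : ℕ := sSup (Set.range fun j => csize Ψ j)

/-- Worst-cluster error fraction `errr(Φ)`. -/
def errrFrac {n k : ℕ} (Ψ Φ : Fin n → Fin k) : ℝ :=
  ⨅ π : Equiv.Perm (Fin k), ⨆ j : Fin k,
    ((Finset.univ.filter fun i => Ψ i = j ∧ π (Φ i) ≠ j).card : ℝ) / (csize Ψ j : ℝ)

/-- Membership matrix `Z` of a partition `Ψ`. -/
def memMatrix {n k : ℕ} (Ψ : Fin n → Fin k) : Matrix (Fin n) (Fin k) ℝ :=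
  fun i j => if Ψ i = j then 1 else 0

/-- Spectral norm of a real square matrix. -/
def specNorm {n : ℕ} (M : Matrix (Fin n) (Fin n) ℝ) : ℝ :=
  ‖Matrix.toEuclideanCLM (𝕜 := ℝ) M‖

/-- Smallest nonzero singular value of a real square matrix. -/
def sigmaNZmin {m : ℕ} (M : Matrix (Fin m) (Fin m) ℝ) : ℝ :=
  sInf {r : ℝ | r ≠ 0 ∧ ∃ i : Fin m,
    r = Real.sqrt ((Matrix.isHermitian_iff_isSymm.mpr (Matrix.isSymm_transpose_mul_self M)).eigenvalues i)}

/-- Smallest singular value of a real square matrix. -/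
def sigmaMin {m : ℕ} (M : Matrix (Fin m) (Fin m) ℝ) : ℝ :=
  sInf {r : ℝ | ∃ i : Fin m,
    r = Real.sqrt ((Matrix.isHermitian_iff_isSymm.mpr (Matrix.isSymm_transpose_mul_self M)).eigenvalues i)}

/-- `den_M(S,T) = Σ_{i∈S} Σ_{j∈T} M_{ij}`. -/
def den {n : ℕ} (M : Matrix (Fin n) (Fin n) ℝ) (S T : Finset (Fin n)) : ℝ :=
  ∑ i ∈ S, ∑ j ∈ T, M i j

/-- `f_e(X) = 1` if all coordinates of `X` indexed by `e` agree, and `0` otherwise. -/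
def fval {nn : ℕ} (X : Fin nn → Bool) (e : Finset (Fin nn)) : ℝ :=
  if ∀ i ∈ e, ∀ j ∈ e, X i = X j then 1 else 0

/-- An instance of the weighted stochastic block model on a measurable space `Ω`. -/
structure WSBM (n d k : ℕ) (p q : ℝ) (Ω : Type*) [MeasurableSpace Ω] where
  μ : Measure Ω
  prob : IsProbabilityMeasure μ
  Ψ : Fin n → Fin k
  surj : Function.Surjective Ψ
  α : ℝ
  α_pos : 0 < α
  α_le_one : α ≤ 1
  W : Finset (Fin n) → Ω → ℝ
  W_meas : ∀ e, Measurable (W e)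
  W_range : ∀ e, ∀ᵐ ω ∂μ, W e ω ∈ Set.Icc (0 : ℝ) 1
  W_indep : iIndepFun W μ
  W_homo : ∀ e ∈ edgeSet n d, homogeneous Ψ e → ∫ ω, W e ω ∂μ = p * α
  W_hetero : ∀ e ∈ edgeSet n d, ¬ homogeneous Ψ e → ∫ ω, W e ω ∂μ = q * α

private lemma euclid_norm_symm {n : ℕ} (x : Fin n → ℝ) :
    ‖(WithLp.equiv 2 (Fin n → ℝ)).symm x‖ = Real.sqrt (∑ i, x i ^ 2) := by
  simp [EuclideanSpace.norm_eq, Real.norm_eq_abs, sq_abs]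

private lemma trunc_spec (t : ℝ) :
    |((if 0 ≤ t then ⌊t⌋ else ⌈t⌉ : ℤ) : ℝ)| ≤ |t| ∧
      |t - ((if 0 ≤ t then ⌊t⌋ else ⌈t⌉ : ℤ) : ℝ)| ≤ 1 := by
  by_cases h : 0 ≤ t
  · rw [if_pos h]
    have h1 : (⌊t⌋ : ℝ) ≤ t := Int.floor_le t
    have h2 : t - 1 < (⌊t⌋ : ℝ) := Int.sub_one_lt_floor t
    have h0 : (0:ℝ) ≤ (⌊t⌋ : ℝ) := by exact_mod_cast Int.floor_nonneg.mpr h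
    rw [abs_of_nonneg h0, abs_of_nonneg h, abs_of_nonneg (by linarith)]
    exact ⟨h1, by linarith⟩
  · push_neg at h
    rw [if_neg (not_le.mpr h)]
    have h1 : t ≤ (⌈t⌉ : ℝ) := Int.le_ceil t
    have h2 : (⌈t⌉ : ℝ) < t + 1 := Int.ceil_lt_add_one t
    have h0' : ⌈t⌉ ≤ (0:ℤ) := Int.ceil_le.mpr (by exact_mod_cast h.le)
    have h0 : ((⌈t⌉ : ℤ) : ℝ) ≤ 0 := by exact_mod_cast h0'
    rw [abs_of_nonpos h0, abs_of_nonpos h.le, abs_of_nonpos (by linarith)]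
    exact ⟨by linarith, by linarith⟩

private lemma dot_bound {n : ℕ} (C : Matrix (Fin n) (Fin n) ℝ) (x y : Fin n → ℝ) :
    |x ⬝ᵥ C.mulVec y| ≤
      specNorm C * (Real.sqrt (∑ i, x i ^ 2) * Real.sqrt (∑ i, y i ^ 2)) := by
  set x' := (WithLp.equiv 2 (Fin n → ℝ)).symm x with hx'
  set y' := (WithLp.equiv 2 (Fin n → ℝ)).symm y with hy'
  have hin : (inner ℝ x' (Matrix.toEuclideanCLM (𝕜 := ℝ) C y') : ℝ) = x ⬝ᵥ C.mulVec y := by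
    exact Matrix.inner_toEuclideanCLM C x' y'
  have h1 : |(inner ℝ x' (Matrix.toEuclideanCLM (𝕜 := ℝ) C y') : ℝ)| ≤
      ‖x'‖ * ‖Matrix.toEuclideanCLM (𝕜 := ℝ) C y'‖ := abs_real_inner_le_norm _ _
  have h2 : ‖Matrix.toEuclideanCLM (𝕜 := ℝ) C y'‖ ≤ specNorm C * ‖y'‖ :=
    ContinuousLinearMap.le_opNorm _ _
  have hKn : (0:ℝ) ≤ specNorm C := norm_nonneg _
  rw [← hin, ← euclid_norm_symm x, ← euclid_norm_symm y, ← hx', ← hy']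
  calc |(inner ℝ x' (Matrix.toEuclideanCLM (𝕜 := ℝ) C y') : ℝ)|
      ≤ ‖x'‖ * ‖Matrix.toEuclideanCLM (𝕜 := ℝ) C y'‖ := h1
    _ ≤ ‖x'‖ * (specNorm C * ‖y'‖) := mul_le_mul_of_nonneg_left h2 (norm_nonneg x')
    _ = specNorm C * (‖x'‖ * ‖y'‖) := by ring

/-- spectral norm bound via a discretization grid. -/
theorem statement11 (n : ℕ) (C : Matrix (Fin n) (Fin n) ℝ) (hC : C.IsSymm)
    (δ : ℝ) (hδ0 : 0 < δ) (hδ1 : δ < 1 / 3) :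
    specNorm C ≤ (1 - 3 * δ)⁻¹ *
      sSup {r : ℝ | ∃ x : Fin n → ℝ, (∑ i, x i ^ 2 ≤ 1) ∧
        (∀ i, ∃ z : ℤ, Real.sqrt n * x i / δ = (z : ℝ)) ∧ r = |x ⬝ᵥ C.mulVec x|} := by
  classical
  have hK0 : (0:ℝ) ≤ specNorm C := norm_nonneg _
  have h3δ : (0:ℝ) < 1 - 3 * δ := by linarith
  set S : Set ℝ := {r : ℝ | ∃ x : Fin n → ℝ, (∑ i, x i ^ 2 ≤ 1) ∧
        (∀ i, ∃ z : ℤ, Real.sqrt n * x i / δ = (z : ℝ)) ∧ r = |x ⬝ᵥ C.mulVec x|} with hSdef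
  have hbdd : BddAbove S := by
    refine ⟨specNorm C, ?_⟩
    rintro r ⟨x, hx1, -, rfl⟩
    have hd := dot_bound C x x
    have hs1 : Real.sqrt (∑ i, x i ^ 2) ≤ 1 := by
      rw [show (1:ℝ) = Real.sqrt 1 by simp]
      exact Real.sqrt_le_sqrt hx1
    have hss : Real.sqrt (∑ i, x i ^ 2) * Real.sqrt (∑ i, x i ^ 2) ≤ 1 := by
      nlinarith [Real.sqrt_nonneg (∑ i, x i ^ 2)]
    calc |x ⬝ᵥ C.mulVec x|
        ≤ specNorm C * (Real.sqrt (∑ i, x i ^ 2) * Real.sqrt (∑ i, x i ^ 2)) := hd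
      _ ≤ specNorm C * 1 := mul_le_mul_of_nonneg_left hss hK0
      _ = specNorm C := mul_one _
  have h0S : (0:ℝ) ∈ S := ⟨0, by simp, fun i => ⟨0, by simp⟩, by simp⟩
  have hM0 : 0 ≤ sSup S := le_csSup hbdd h0S
  -- Step 1: grid approximation on the unit ball
  have hgrid : ∀ x : Fin n → ℝ, ∑ i, x i ^ 2 ≤ 1 →
      |x ⬝ᵥ C.mulVec x| ≤ sSup S + 2 * δ * specNorm C := by
    intro x hx
    rcases Nat.eq_zero_or_pos n with hn | hn
    · haveI : IsEmpty (Fin n) := by subst hn; infer_instance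
      have hz : x ⬝ᵥ C.mulVec x = 0 := by simp [dotProduct]
      rw [hz, abs_zero]
      nlinarith [hM0, hK0, hδ0.le]
    · have hc0 : (0:ℝ) < Real.sqrt n := Real.sqrt_pos.mpr (by exact_mod_cast hn)
      set c := Real.sqrt (n:ℝ) with hcdef
      set y : Fin n → ℝ := fun i =>
        δ / c * ((if 0 ≤ c * x i / δ then ⌊c * x i / δ⌋ else ⌈c * x i / δ⌉ : ℤ) : ℝ) with hydef
      have hpos : (0:ℝ) < δ / c := div_pos hδ0 hc0
      have hxi : ∀ i, x i = δ / c * (c * x i / δ) := by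
        intro i; field_simp
      have hyi : ∀ i, y i =
          δ / c * ((if 0 ≤ c * x i / δ then ⌊c * x i / δ⌋ else ⌈c * x i / δ⌉ : ℤ) : ℝ) :=
        fun i => by simp only [hydef]
      have habs1 : ∀ i, |y i| ≤ |x i| := by
        intro i
        have h1 := (trunc_spec (c * x i / δ)).1
        have hxabs : δ / c * |c * x i / δ| = |x i| := by
          rw [← abs_of_pos hpos, ← abs_mul, ← hxi i]
        have hyabs : |y i| = δ / c *
            |((if 0 ≤ c * x i / δ then ⌊c * x i / δ⌋ else ⌈c * x i / δ⌉ : ℤ) : ℝ)| := by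
          rw [hyi i, abs_mul, abs_of_pos hpos]
        rw [hyabs, ← hxabs]
        exact mul_le_mul_of_nonneg_left h1 hpos.le
      have habs2 : ∀ i, |x i - y i| ≤ δ / c := by
        intro i
        have h2 := (trunc_spec (c * x i / δ)).2
        have hsub : δ / c * (c * x i / δ -
            ((if 0 ≤ c * x i / δ then ⌊c * x i / δ⌋ else ⌈c * x i / δ⌉ : ℤ) : ℝ)) = x i - y i := by
          rw [mul_sub, ← hxi i, ← hyi i]
        rw [← hsub, abs_mul, abs_of_pos hpos]
        have := mul_le_mul_of_nonneg_left h2 hpos.le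
        simpa using this
      have hy1 : ∑ i, y i ^ 2 ≤ 1 := by
        refine le_trans (Finset.sum_le_sum fun i _ => ?_) hx
        calc y i ^ 2 = |y i| ^ 2 := (sq_abs _).symm
          _ ≤ |x i| ^ 2 := pow_le_pow_left₀ (abs_nonneg _) (habs1 i) 2
          _ = x i ^ 2 := sq_abs _
      have hxy : ∑ i, (x i - y i) ^ 2 ≤ δ ^ 2 := by
        have hstep : ∀ i ∈ Finset.univ, (x i - y i) ^ 2 ≤ (δ / c) ^ 2 := fun i _ => by
          calc (x i - y i) ^ 2 = |x i - y i| ^ 2 := (sq_abs _).symm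
            _ ≤ (δ / c) ^ 2 := pow_le_pow_left₀ (abs_nonneg _) (habs2 i) 2
        calc ∑ i, (x i - y i) ^ 2 ≤ ∑ _i : Fin n, (δ / c) ^ 2 := Finset.sum_le_sum hstep
          _ = n * (δ / c) ^ 2 := by
              rw [Finset.sum_const, Finset.card_univ, Fintype.card_fin, nsmul_eq_mul]
          _ = δ ^ 2 := by
              rw [div_pow, hcdef, Real.sq_sqrt (Nat.cast_nonneg n)]
              field_simp
      have hgm : ∀ i, ∃ z : ℤ, c * y i / δ = (z : ℝ) := by
        intro i
        refine ⟨(if 0 ≤ c * x i / δ then ⌊c * x i / δ⌋ else ⌈c * x i / δ⌉ : ℤ), ?_⟩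
        have hw : ∀ w : ℝ, c * (δ / c * w) / δ = w := by
          intro w; field_simp
        rw [hyi i]
        exact hw _
      have hyM : |y ⬝ᵥ C.mulVec y| ≤ sSup S := by
        refine le_csSup hbdd ?_
        rw [hSdef]
        exact ⟨y, hy1, hgm, rfl⟩
      have hdec : x ⬝ᵥ C.mulVec x =
          y ⬝ᵥ C.mulVec y + ((x - y) ⬝ᵥ C.mulVec x + y ⬝ᵥ C.mulVec (x - y)) := by
        simp only [sub_dotProduct, Matrix.mulVec_sub, dotProduct_sub]
        ring
      have hb1 := dot_bound C (x - y) x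
      have hb2 := dot_bound C y (x - y)
      simp only [Pi.sub_apply] at hb1 hb2
      have hNxy : Real.sqrt (∑ i, (x i - y i) ^ 2) ≤ δ := by
        rw [show δ = Real.sqrt (δ ^ 2) by rw [Real.sqrt_sq hδ0.le]]
        exact Real.sqrt_le_sqrt hxy
      have hNx : Real.sqrt (∑ i, x i ^ 2) ≤ 1 := by
        rw [show (1:ℝ) = Real.sqrt 1 by simp]
        exact Real.sqrt_le_sqrt hx
      have hNy : Real.sqrt (∑ i, y i ^ 2) ≤ 1 := by
        rw [show (1:ℝ) = Real.sqrt 1 by simp]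
        exact Real.sqrt_le_sqrt hy1
      have n1 := Real.sqrt_nonneg (∑ i, (x i - y i) ^ 2)
      have n2 := Real.sqrt_nonneg (∑ i, x i ^ 2)
      have n3 := Real.sqrt_nonneg (∑ i, y i ^ 2)
      have e1 : Real.sqrt (∑ i, (x i - y i) ^ 2) * Real.sqrt (∑ i, x i ^ 2) ≤ δ := by
        calc Real.sqrt (∑ i, (x i - y i) ^ 2) * Real.sqrt (∑ i, x i ^ 2)
            ≤ δ * 1 := mul_le_mul hNxy hNx n2 hδ0.le
          _ = δ := mul_one δ
      have e2 : Real.sqrt (∑ i, y i ^ 2) * Real.sqrt (∑ i, (x i - y i) ^ 2) ≤ δ := by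
        calc Real.sqrt (∑ i, y i ^ 2) * Real.sqrt (∑ i, (x i - y i) ^ 2)
            ≤ 1 * δ := mul_le_mul hNy hNxy n1 zero_le_one
          _ = δ := one_mul δ
      have hb1' : |(x - y) ⬝ᵥ C.mulVec x| ≤ specNorm C * δ :=
        hb1.trans (mul_le_mul_of_nonneg_left e1 hK0)
      have hb2' : |y ⬝ᵥ C.mulVec (x - y)| ≤ specNorm C * δ :=
        hb2.trans (mul_le_mul_of_nonneg_left e2 hK0)
      calc |x ⬝ᵥ C.mulVec x|
          ≤ |y ⬝ᵥ C.mulVec y| + (|(x - y) ⬝ᵥ C.mulVec x| + |y ⬝ᵥ C.mulVec (x - y)|) := by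
            rw [hdec]
            exact (abs_add_le _ _).trans (by gcongr; exact abs_add_le _ _)
        _ ≤ sSup S + 2 * δ * specNorm C := by linarith
  have hB0 : 0 ≤ sSup S + 2 * δ * specNorm C := by nlinarith [hM0, hK0, hδ0.le]
  -- Step 2: homogeneous quadratic bound
  have hQ : ∀ v : Fin n → ℝ, |v ⬝ᵥ C.mulVec v| ≤
      (sSup S + 2 * δ * specNorm C) * ∑ i, v i ^ 2 := by
    intro v
    have hs0 : (0:ℝ) ≤ ∑ i, v i ^ 2 := Finset.sum_nonneg fun i _ => sq_nonneg _
    rcases hs0.eq_or_lt with h | h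
    · have hv : ∀ i, v i = 0 := by
        intro i
        have := (Finset.sum_eq_zero_iff_of_nonneg
          (fun i _ => sq_nonneg (v i))).mp h.symm i (Finset.mem_univ i)
        exact pow_eq_zero_iff (by norm_num : (2:ℕ) ≠ 0) |>.mp this
      have hvd : v ⬝ᵥ C.mulVec v = 0 := by
        have : v = 0 := funext hv
        rw [this]
        simp
      rw [hvd, abs_zero, ← h, mul_zero]
    · have hsq : 0 < Real.sqrt (∑ i, v i ^ 2) := Real.sqrt_pos.mpr h
      have hsum : ∑ i, ((Real.sqrt (∑ j, v j ^ 2))⁻¹ • v) i ^ 2 = 1 := by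
        simp only [Pi.smul_apply, smul_eq_mul, mul_pow, ← Finset.mul_sum]
        rw [inv_pow, Real.sq_sqrt hs0]
        exact inv_mul_cancel₀ h.ne'
      have hdot : ((Real.sqrt (∑ j, v j ^ 2))⁻¹ • v) ⬝ᵥ
          C.mulVec ((Real.sqrt (∑ j, v j ^ 2))⁻¹ • v) =
          (Real.sqrt (∑ j, v j ^ 2))⁻¹ * ((Real.sqrt (∑ j, v j ^ 2))⁻¹ * (v ⬝ᵥ C.mulVec v)) := by
        rw [smul_dotProduct, Matrix.mulVec_smul, dotProduct_smul]
        simp [smul_eq_mul]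
      have hg := hgrid ((Real.sqrt (∑ j, v j ^ 2))⁻¹ • v) hsum.le
      rw [hdot, abs_mul, abs_mul, abs_of_nonneg (inv_nonneg.mpr (Real.sqrt_nonneg _)),
        ← mul_assoc, ← mul_inv, Real.mul_self_sqrt hs0] at hg
      have hfin := mul_le_mul_of_nonneg_left hg h.le
      rw [← mul_assoc, mul_inv_cancel₀ h.ne', one_mul] at hfin
      linarith
  -- Step 3: bilinear bound by polarization
  have hsym : ∀ a b : Fin n → ℝ, a ⬝ᵥ C.mulVec b = b ⬝ᵥ C.mulVec a := fun a b => by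
    rw [Matrix.dotProduct_mulVec, ← Matrix.mulVec_transpose, hC, dotProduct_comm]
  have hbil : ∀ a b : Fin n → ℝ, |a ⬝ᵥ C.mulVec b| ≤
      (sSup S + 2 * δ * specNorm C) / 2 * (∑ i, a i ^ 2 + ∑ i, b i ^ 2) := by
    intro a b
    have hpar : a ⬝ᵥ C.mulVec b =
        ((a + b) ⬝ᵥ C.mulVec (a + b) - (a - b) ⬝ᵥ C.mulVec (a - b)) / 4 := by
      simp only [Matrix.mulVec_add, Matrix.mulVec_sub, add_dotProduct,
        sub_dotProduct, dotProduct_add, dotProduct_sub]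
      linarith [hsym b a]
    have h1 := hQ (a + b)
    have h2 := hQ (a - b)
    have hsum : ∑ i, (a + b) i ^ 2 + ∑ i, (a - b) i ^ 2 =
        2 * (∑ i, a i ^ 2 + ∑ i, b i ^ 2) := by
      simp only [Pi.add_apply, Pi.sub_apply]
      rw [← Finset.sum_add_distrib, ← Finset.sum_add_distrib, Finset.mul_sum]
      exact Finset.sum_congr rfl fun i _ => by ring
    have hk : (sSup S + 2 * δ * specNorm C) * (∑ i, (a + b) i ^ 2) +
        (sSup S + 2 * δ * specNorm C) * (∑ i, (a - b) i ^ 2) =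
        2 * ((sSup S + 2 * δ * specNorm C) * (∑ i, a i ^ 2 + ∑ i, b i ^ 2)) := by
      rw [← mul_add, hsum]
      ring
    have habs : |(a + b) ⬝ᵥ C.mulVec (a + b) - (a - b) ⬝ᵥ C.mulVec (a - b)| ≤
        |(a + b) ⬝ᵥ C.mulVec (a + b)| + |(a - b) ⬝ᵥ C.mulVec (a - b)| := abs_sub _ _
    rw [hpar, abs_div, show |(4:ℝ)| = 4 by norm_num]
    rw [div_le_iff₀ (by norm_num : (0:ℝ) < 4)]
    linarith
  -- Step 4: operator norm bound
  have hop : specNorm C ≤ sSup S + 2 * δ * specNorm C := by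
    rw [specNorm]
    refine ContinuousLinearMap.opNorm_le_bound _ hB0 fun u => ?_
    set xx : Fin n → ℝ := WithLp.equiv 2 (Fin n → ℝ) u with hxxdef
    have hu : u = (WithLp.equiv 2 (Fin n → ℝ)).symm xx := (Equiv.symm_apply_apply _ u).symm
    have hTu : Matrix.toEuclideanCLM (𝕜 := ℝ) C u =
        (WithLp.equiv 2 (Fin n → ℝ)).symm (C.mulVec xx) := by
      conv_lhs => rw [hu]
      rw [WithLp.equiv_symm_apply, Matrix.toEuclideanCLM_toLp]
    have hnu : ‖u‖ = Real.sqrt (∑ i, xx i ^ 2) := by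
      conv_lhs => rw [hu]
      exact euclid_norm_symm xx
    have hnTu : ‖Matrix.toEuclideanCLM (𝕜 := ℝ) C u‖ =
        Real.sqrt (∑ i, (C.mulVec xx) i ^ 2) := by
      rw [hTu]; exact euclid_norm_symm _
    rw [hnu, hnTu]
    have hP0 : (0:ℝ) ≤ ∑ i, (C.mulVec xx) i ^ 2 := Finset.sum_nonneg fun i _ => sq_nonneg _
    have hs0 : (0:ℝ) ≤ ∑ i, xx i ^ 2 := Finset.sum_nonneg fun i _ => sq_nonneg _
    rcases hP0.eq_or_lt with hP' | hP'
    · rw [← hP', Real.sqrt_zero]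
      exact mul_nonneg hB0 (Real.sqrt_nonneg _)
    · rcases hs0.eq_or_lt with hs' | hs'
      · exfalso
        have hx0 : xx = 0 := by
          funext i
          have := (Finset.sum_eq_zero_iff_of_nonneg
            (fun i _ => sq_nonneg (xx i))).mp hs'.symm i (Finset.mem_univ i)
          exact pow_eq_zero_iff (by norm_num : (2:ℕ) ≠ 0) |>.mp this
        have hP : ∑ i, (C.mulVec xx) i ^ 2 = 0 := by
          rw [hx0]
          simp
        exact hP'.ne' hP
      · have hsqP0 : (0:ℝ) < Real.sqrt (∑ i, (C.mulVec xx) i ^ 2) := Real.sqrt_pos.mpr hP'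
        have hsqs0 : (0:ℝ) < Real.sqrt (∑ i, xx i ^ 2) := Real.sqrt_pos.mpr hs'
        set cc := Real.sqrt (∑ i, xx i ^ 2) / Real.sqrt (∑ i, (C.mulVec xx) i ^ 2) with hccdef
        have hQQ : (C.mulVec xx) ⬝ᵥ C.mulVec xx = ∑ i, (C.mulVec xx) i ^ 2 := by
          simp [dotProduct, sq]
        have hb := hbil (cc • C.mulVec xx) xx
        have h1 : (cc • C.mulVec xx) ⬝ᵥ C.mulVec xx = cc * ∑ i, (C.mulVec xx) i ^ 2 := by
          rw [smul_dotProduct, smul_eq_mul, hQQ]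
        have h2 : ∑ i, (cc • C.mulVec xx) i ^ 2 = cc ^ 2 * ∑ i, (C.mulVec xx) i ^ 2 := by
          rw [Finset.mul_sum]
          exact Finset.sum_congr rfl fun i _ => by
            rw [Pi.smul_apply, smul_eq_mul, mul_pow]
        have hcc2 : cc ^ 2 * ∑ i, (C.mulVec xx) i ^ 2 = ∑ i, xx i ^ 2 := by
          rw [hccdef, div_pow, Real.sq_sqrt hs0, Real.sq_sqrt hP0]
          exact div_mul_cancel₀ _ hP'.ne'
        have hm : Real.sqrt (∑ i, (C.mulVec xx) i ^ 2) * Real.sqrt (∑ i, (C.mulVec xx) i ^ 2) =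
            ∑ i, (C.mulVec xx) i ^ 2 := Real.mul_self_sqrt hP0
        have hccP : cc * ∑ i, (C.mulVec xx) i ^ 2 =
            Real.sqrt (∑ i, xx i ^ 2) * Real.sqrt (∑ i, (C.mulVec xx) i ^ 2) := by
          rw [hccdef, ← hm]
          field_simp
          rw [Real.sq_sqrt (sq_nonneg (Real.sqrt (∑ i, (C.mulVec xx) i ^ 2)))]
        rw [h1, h2, hcc2] at hb
        have hccpos : 0 ≤ cc * ∑ i, (C.mulVec xx) i ^ 2 := by
          rw [hccP]
          positivity
        rw [abs_of_nonneg hccpos, hccP] at hb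
        have hms : Real.sqrt (∑ i, xx i ^ 2) * Real.sqrt (∑ i, xx i ^ 2) = ∑ i, xx i ^ 2 :=
          Real.mul_self_sqrt hs0
        have h5 : Real.sqrt (∑ i, xx i ^ 2) *
            ((sSup S + 2 * δ * specNorm C) * Real.sqrt (∑ i, xx i ^ 2)) =
            (sSup S + 2 * δ * specNorm C) * ∑ i, xx i ^ 2 := by
          linear_combination (sSup S + 2 * δ * specNorm C) * hms
        have h6 : Real.sqrt (∑ i, xx i ^ 2) * Real.sqrt (∑ i, (C.mulVec xx) i ^ 2) ≤
            Real.sqrt (∑ i, xx i ^ 2) *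
              ((sSup S + 2 * δ * specNorm C) * Real.sqrt (∑ i, xx i ^ 2)) := by
          rw [h5]; linarith
        exact le_of_mul_le_mul_left h6 hsqs0
  -- Conclusion
  have hfin : (1 - 3 * δ) * specNorm C ≤ sSup S := by nlinarith [hop, hK0, hδ0.le]
  calc specNorm C = (1 - 3 * δ)⁻¹ * ((1 - 3 * δ) * specNorm C) :=
        (inv_mul_cancel_left₀ h3δ.ne' _).symm
    _ ≤ (1 - 3 * δ)⁻¹ * sSup S := mul_le_mul_of_nonneg_left hfin (inv_nonneg.mpr h3δ.le)


end HSBM
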